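/- The set G_R = { σ^n ∘ f : n ∈ ℤ, f a local permutation such that there exist functions g_i with f(x)_i = g_i(x|_{(-∞,i]}) for all x, i } is a proper subgroup of G. -/

import Mathlib

noncomputable section

/-- The full binary shift space `{0,1}^ℤ`. -/
abbrev X : Type := ℤ → ZMod 2

instance : Group (X ≃ₜ X) where
  mul f g := g.trans f
  one := Homeomorph.refl X
  inv := Homeomorph.symm
  mul_assoc f g h := rfl
  one_mul f := Homeomorph.ext fun _ => rfl
  mul_one f := Homeomorph.ext fun _ => rfl
  inv_mul_cancel f := Homeomorph.ext fun x => f.symm_apply_apply x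

/-- The shift `σ^n`, `σ^n(x)_i = x_{i+n}`. -/
def shiftPow (n : ℤ) : X ≃ₜ X where
  toFun x i := x (i + n)
  invFun x i := x (i - n)
  left_inv x := funext fun i => congrArg x (by ring)
  right_inv x := funext fun i => congrArg x (by ring)
  continuous_toFun := continuous_pi fun i => continuous_apply (i + n)
  continuous_invFun := continuous_pi fun i => continuous_apply (i - n)

/-- The shift `σ`. -/
def shiftHomeo : X ≃ₜ X := shiftPow 1

/-- A local permutation: a self-homeomorphism fixing all coordinates outside a bounded interval. -/
def IsLocalPerm (f : X ≃ₜ X) : Prop :=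
  ∃ r : ℤ, ∀ (x : X) (i : ℤ), r ≤ |i| → f x i = x i

/-- The group `G` generated by the shift and the local permutations. -/
def Ggrp : Subgroup (X ≃ₜ X) :=
  Subgroup.closure ({shiftHomeo} ∪ {f | IsLocalPerm f})

/-- Build a homeomorphism of `X` from an involutive continuous map. -/
def mkInvHomeo (F : X → X) (h : Function.Involutive F) (hc : Continuous F) : X ≃ₜ X :=
  ⟨Function.Involutive.toPerm F h, hc, hc⟩

/-- A local permutation is right-moving if each output coordinate depends only on the input
coordinates to its left (inclusive). -/
def RightMoving (f : X ≃ₜ X) : Prop :=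
  ∃ g : (i : ℤ) → ({j : ℤ // j ≤ i} → ZMod 2) → ZMod 2,
    ∀ (x : X) (i : ℤ), f x i = g i fun j => x (j : ℤ)

/- ---------- auxiliary lemmas ---------- -/

lemma rm_ext {f : X ≃ₜ X} (hr : RightMoving f) {u v : X} {i : ℤ}
    (h : ∀ j ≤ i, u j = v j) : ∀ j ≤ i, f u j = f v j := by
  obtain ⟨g, hg⟩ := hr
  intro j hj
  rw [hg, hg]
  congr 1
  funext k
  exact h k (le_trans k.2 hj)

lemma rightMoving_of_ext {f : X ≃ₜ X}
    (h : ∀ (u v : X) (i : ℤ), (∀ j ≤ i, u j = v j) → f u i = f v i) :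
    RightMoving f := by
  refine ⟨fun i v => f (fun j => if hj : j ≤ i then v ⟨j, hj⟩ else 0) i, fun x i => ?_⟩
  exact h x _ i (fun j hj => by rw [dif_pos hj])

lemma isLocalPerm_one : IsLocalPerm (1 : X ≃ₜ X) := ⟨0, fun _ _ _ => rfl⟩

lemma rightMoving_one : RightMoving (1 : X ≃ₜ X) :=
  ⟨fun i v => v ⟨i, le_refl i⟩, fun _ _ => rfl⟩

lemma isLocalPerm_trans {f g : X ≃ₜ X} (hf : IsLocalPerm f) (hg : IsLocalPerm g) :
    IsLocalPerm (f.trans g) := by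
  obtain ⟨r1, h1⟩ := hf
  obtain ⟨r2, h2⟩ := hg
  refine ⟨max r1 r2, fun x i hi => ?_⟩
  show g (f x) i = x i
  rw [h2 _ _ (le_trans (le_max_right _ _) hi), h1 _ _ (le_trans (le_max_left _ _) hi)]

lemma rightMoving_trans {f g : X ≃ₜ X} (hf : RightMoving f) (hg : RightMoving g) :
    RightMoving (f.trans g) := by
  apply rightMoving_of_ext
  intro u v i h
  show g (f u) i = g (f v) i
  exact rm_ext hg (rm_ext hf h) i le_rfl

lemma isLocalPerm_symm {f : X ≃ₜ X} (hf : IsLocalPerm f) : IsLocalPerm f.symm := by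
  obtain ⟨r, h⟩ := hf
  refine ⟨r, fun y i hi => ?_⟩
  have := h (f.symm y) i hi
  rw [f.apply_symm_apply] at this
  exact this.symm

def conjS (n : ℤ) (f : X ≃ₜ X) : X ≃ₜ X := (shiftPow n).trans (f.trans (shiftPow (-n)))

lemma isLocalPerm_conjS (n : ℤ) (f : X ≃ₜ X) (hf : IsLocalPerm f) :
    IsLocalPerm (conjS n f) := by
  obtain ⟨r, h⟩ := hf
  refine ⟨r + |n|, fun x i hi => ?_⟩
  have h1 : r ≤ |i + -n| := by
    have h2 := abs_add_le (i + -n) n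
    have he : (i + -n) + n = i := by ring
    rw [he] at h2
    linarith
  show f (shiftPow n x) (i + -n) = x i
  rw [h _ _ h1]
  show x ((i + -n) + n) = x i
  exact congrArg x (by ring)

lemma rightMoving_conjS (n : ℤ) (f : X ≃ₜ X) (hf : RightMoving f) :
    RightMoving (conjS n f) := by
  apply rightMoving_of_ext
  intro u v i h
  show f (shiftPow n u) (i + -n) = f (shiftPow n v) (i + -n)
  refine rm_ext hf ?_ (i + -n) le_rfl
  intro j hj
  show u (j + n) = v (j + n)
  exact h _ (by omega)

/-- The key pigeonhole lemma: the inverse of a right-moving local permutation is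
determined to the left. -/
lemma symm_ext {f : X ≃ₜ X} (hl : IsLocalPerm f) (hr : RightMoving f)
    (x y : X) (i : ℤ) (hxy : ∀ j ≤ i, x j = y j) : f.symm x i = f.symm y i := by
  obtain ⟨r, hrad⟩ := hl
  set R := max r i with hRdef
  have hRr : r ≤ R := le_max_left _ _
  have hRi : i ≤ R := le_max_right _ _
  set T := Finset.Ioc i R with hT
  let patch : X → (T → ZMod 2) → X := fun a z j =>
    if hj : j ≤ i then a j else if hj2 : j ∈ T then z ⟨j, hj2⟩ else 0
  have patch_le : ∀ a z j, j ≤ i → patch a z j = a j := by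
    intro a z j hj; simp only [patch, dif_pos hj]
  have patch_mem : ∀ a z (t : T), patch a z (t : ℤ) = z t := by
    intro a z t
    have h1 : ¬ ((t : ℤ) ≤ i) := by
      have := (Finset.mem_Ioc.mp t.2).1; omega
    simp only [patch, dif_neg h1, dif_pos t.2]
  have patch_gt : ∀ a z j, R < j → patch a z j = 0 := by
    intro a z j hj
    have h1 : ¬ (j ≤ i) := by omega
    have h2 : j ∉ T := by
      simp only [hT, Finset.mem_Ioc, not_and]; omega
    simp only [patch, dif_neg h1, dif_neg h2]
  have habs : ∀ j : ℤ, R < j → r ≤ |j| :=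
    fun j hj => le_trans (le_trans hRr hj.le) (le_abs_self j)
  set a := f.symm x with ha
  set b := f.symm y with hb
  have hinj : Function.Injective (fun z : T → ZMod 2 => fun t : T => f (patch b z) (t : ℤ)) := by
    intro z z' hzz'
    have hfull : f (patch b z) = f (patch b z') := by
      funext j
      rcases le_or_gt j i with hj | hj
      · refine rm_ext hr (u := patch b z) (v := patch b z') (i := i) ?_ j hj
        intro k hk
        rw [patch_le b z k hk, patch_le b z' k hk]
      · rcases le_or_gt j R with hj2 | hj2
        · exact congrFun hzz' ⟨j, Finset.mem_Ioc.mpr ⟨hj, hj2⟩⟩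
        · have g1 := hrad (patch b z) j (habs j hj2)
          have g2 := hrad (patch b z') j (habs j hj2)
          exact (g1.trans (patch_gt b z j hj2)).trans
            ((g2.trans (patch_gt b z' j hj2)).symm)
    have hp : patch b z = patch b z' := f.injective hfull
    funext t
    rw [← patch_mem b z t, ← patch_mem b z' t, hp]
  have hsurj := Finite.surjective_of_injective hinj
  obtain ⟨z', hz'⟩ := hsurj (fun t : T => f (patch a (fun _ => 0)) (t : ℤ))
  have hfull : f (patch a (fun _ => 0)) = f (patch b z') := by
    funext j
    rcases le_or_gt j i with hj | hj
    · have h1 : f (patch a (fun _ => 0)) j = f a j :=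
        rm_ext hr (u := patch a (fun _ => 0)) (v := a) (i := i)
          (fun k hk => patch_le a (fun _ => 0) k hk) j hj
      have h2 : f (patch b z') j = f b j :=
        rm_ext hr (u := patch b z') (v := b) (i := i)
          (fun k hk => patch_le b z' k hk) j hj
      rw [h1, h2, ha, hb, f.apply_symm_apply, f.apply_symm_apply]
      exact hxy j hj
    · rcases le_or_gt j R with hj2 | hj2
      · exact (congrFun hz' ⟨j, Finset.mem_Ioc.mpr ⟨hj, hj2⟩⟩).symm
      · have g1 := hrad (patch a (fun _ => 0)) j (habs j hj2)
        have g2 := hrad (patch b z') j (habs j hj2)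
        exact (g1.trans (patch_gt a (fun _ => 0) j hj2)).trans
          ((g2.trans (patch_gt b z' j hj2)).symm)
  have hp : patch a (fun _ => 0) = patch b z' := f.injective hfull
  show a i = b i
  exact (patch_le a (fun _ => 0) i le_rfl).symm.trans
    ((congrFun hp i).trans (patch_le b z' i le_rfl))

lemma rightMoving_symm {f : X ≃ₜ X} (hl : IsLocalPerm f) (hr : RightMoving f) :
    RightMoving f.symm :=
  rightMoving_of_ext fun u v i h => symm_ext hl hr u v i h

/- ---------- the subgroup ---------- -/

def HR : Subgroup (X ≃ₜ X) where
  carrier := {h : X ≃ₜ X | ∃ (n : ℤ) (f : X ≃ₜ X), IsLocalPerm f ∧ RightMoving f ∧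
    h = f.trans (shiftPow n)}
  one_mem' := ⟨0, 1, isLocalPerm_one, rightMoving_one,
    Homeomorph.ext fun x => funext fun i => (congrArg x (add_zero i)).symm⟩
  mul_mem' := by
    rintro a b ⟨na, fa, hla, hra, rfl⟩ ⟨nb, fb, hlb, hrb, rfl⟩
    refine ⟨na + nb, fb.trans (conjS nb fa),
      isLocalPerm_trans hlb (isLocalPerm_conjS nb fa hla),
      rightMoving_trans hrb (rightMoving_conjS nb fa hra), ?_⟩
    refine Homeomorph.ext fun x => funext fun i => ?_
    show fa (shiftPow nb (fb x)) (i + na) = fa (shiftPow nb (fb x)) ((i + (na + nb)) + -nb)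
    exact congrArg _ (by ring)
  inv_mem' := by
    rintro a ⟨n, f, hl, hr, rfl⟩
    refine ⟨-n, conjS (-n) f.symm, isLocalPerm_conjS _ _ (isLocalPerm_symm hl),
      rightMoving_conjS _ _ (rightMoving_symm hl hr), ?_⟩
    refine Homeomorph.ext fun x => funext fun i => ?_
    show f.symm ((shiftPow n).symm x) i = f.symm (shiftPow (-n) x) ((i + -n) + -(-n))
    have harg : (shiftPow n).symm x = shiftPow (-n) x :=
      funext fun j => congrArg x (sub_eq_add_neg j n)
    rw [harg]
    exact congrArg _ (by ring)

/- ---------- containment in G ---------- -/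

lemma shiftPow_mul (m n : ℤ) : shiftPow m * shiftPow n = shiftPow (m + n) :=
  Homeomorph.ext fun x => funext fun i => congrArg x (by ring)

lemma shiftPow_zero : shiftPow 0 = 1 :=
  Homeomorph.ext fun x => funext fun i => congrArg x (add_zero i)

lemma shiftHomeo_zpow (n : ℤ) : shiftHomeo ^ n = shiftPow n := by
  have hinv : shiftHomeo⁻¹ = shiftPow (-1) := by
    apply inv_eq_of_mul_eq_one_right
    show shiftPow 1 * shiftPow (-1) = 1
    rw [shiftPow_mul]
    norm_num [shiftPow_zero]
  induction n using Int.induction_on with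
  | zero => rw [zpow_zero]; exact shiftPow_zero.symm
  | succ k ih =>
      rw [zpow_add_one, ih]
      show shiftPow k * shiftPow 1 = shiftPow (k + 1)
      exact shiftPow_mul k 1
  | pred k ih =>
      rw [zpow_sub_one, ih, hinv, shiftPow_mul]
      exact congrArg shiftPow (by ring)

/- ---------- properness via the swap ---------- -/

def swapF : X → X := fun x j => if j = 0 then x 1 else if j = 1 then x 0 else x j

lemma swapF_inv : Function.Involutive swapF := by
  intro x; funext j
  by_cases h0 : j = 0
  · subst h0; simp [swapF]
  · by_cases h1 : j = 1
    · subst h1; simp [swapF]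
    · simp [swapF, h0, h1]

lemma swapF_cont : Continuous swapF := by
  apply continuous_pi
  intro j
  by_cases h0 : j = 0
  · subst h0; simpa [swapF] using continuous_apply (1 : ℤ)
  · by_cases h1 : j = 1
    · subst h1; simpa [swapF, h0] using continuous_apply (0 : ℤ)
    · simpa [swapF, h0, h1] using continuous_apply j

def swapHomeo : X ≃ₜ X := mkInvHomeo swapF swapF_inv swapF_cont

lemma swap_localPerm : IsLocalPerm swapHomeo := by
  refine ⟨2, fun x i hi => ?_⟩
  have h0 : i ≠ 0 := by rintro rfl; norm_num at hi
  have h1 : i ≠ 1 := by rintro rfl; norm_num at hi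
  show swapF x i = x i
  simp [swapF, h0, h1]

lemma swap_not_in : swapHomeo ∉ HR := by
  rintro ⟨n, f, ⟨r, hrad⟩, hr, heq⟩
  have happ : ∀ (x : X) (i : ℤ), swapF x i = f x (i + n) :=
    fun x i => congrFun (congrArg (fun h : X ≃ₜ X => h x) heq) i
  rcases le_or_gt n 0 with hn | hn
  · set x0 : X := fun _ => 0 with hx0
    set x1 : X := fun j => if j = 1 then 1 else 0 with hx1
    have hagree : ∀ j ≤ (0:ℤ) + n, x0 j = x1 j := by
      intro j hj
      have hne : j ≠ 1 := by omega
      simp [hx0, hx1, hne]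
    have h1 : f x0 (0 + n) = f x1 (0 + n) := rm_ext hr hagree _ le_rfl
    have : (0 : ZMod 2) = 1 := by
      calc (0 : ZMod 2) = swapF x0 0 := by simp [swapF, hx0]
        _ = f x0 (0 + n) := happ x0 0
        _ = f x1 (0 + n) := h1
        _ = swapF x1 0 := (happ x1 0).symm
        _ = 1 := by simp [swapF, hx1]
    exact absurd this (by decide)
  · obtain ⟨i, hi2, hrle, hisum⟩ : ∃ i : ℤ, 2 ≤ i ∧ r ≤ i + n ∧ 2 ≤ i + n := by
      refine ⟨|r| + |n| + 2, ?_, ?_, ?_⟩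
      · have := abs_nonneg r; have := abs_nonneg n; linarith
      · have h1 := le_abs_self r
        have h2 := neg_abs_le n
        have := abs_nonneg n
        linarith
      · have := abs_nonneg r
        have h2 := neg_abs_le n
        linarith
    set x : X := fun j => if j = i then 1 else 0 with hx
    have e1 : swapF x i = 1 := by
      have h0 : i ≠ 0 := by omega
      have h1 : i ≠ 1 := by omega
      simp [swapF, hx, h0, h1]
    have e2 : f x (i + n) = 0 := by
      rw [hrad x (i + n) (le_trans hrle (le_abs_self _))]
      have : i + n ≠ i := by omega
      simp [hx, this]
    have : (1 : ZMod 2) = 0 := by rw [← e1, happ, e2]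
    exact absurd this (by decide)

/- ---------- the theorem ---------- -/

/-- `G_R`, the set of maps `σ^n ∘ f` with `f` a right-moving local permutation, is a proper
subgroup of `G`. -/
theorem stmt12 :
    ∃ H : Subgroup (X ≃ₜ X),
      (H : Set (X ≃ₜ X)) =
        {h : X ≃ₜ X | ∃ (n : ℤ) (f : X ≃ₜ X), IsLocalPerm f ∧ RightMoving f ∧
          h = f.trans (shiftPow n)} ∧
      H < Ggrp := by
  refine ⟨HR, rfl, ?_⟩
  have hle : HR ≤ Ggrp := by
    rintro a ⟨n, f, hl, hr, rfl⟩
    have h1 : f ∈ Ggrp := Subgroup.subset_closure (Or.inr hl)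
    have h2 : shiftHomeo ∈ Ggrp := Subgroup.subset_closure (Or.inl rfl)
    have h3 : shiftPow n ∈ Ggrp := by rw [← shiftHomeo_zpow n]; exact zpow_mem h2 n
    exact mul_mem h3 h1
  refine lt_of_le_of_ne hle fun hEq => ?_
  have hsG : swapHomeo ∈ Ggrp := Subgroup.subset_closure (Or.inr swap_localPerm)
  rw [← hEq] at hsG
  exact swap_not_in hsG
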